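/- Assume d is not a square in F. For every integer r ≥ 0 and every u ∈ o, the double cosets T(F)·diag(ϖ^r, 1)·w·I and T(F)·diag(ϖ^r, 1)·[[1, 0], [u, 1]]·I in GL₂(F) are equal if and only if a·ϖ^{2r} + b·ϖ^r·u + c·u² ∈ o^×. -/

import Mathlib

open scoped Pointwise
open Matrix

noncomputable section

abbrev Zm0 : Type := WithZero (Multiplicative ℤ)

/-- `ev n` is the value (in `ℤₘ₀ = WithZero (Multiplicative ℤ)`) of an element of additive
valuation `n`; thus `x ∈ 𝔭^n` iff `v x ≤ ev n`, `x ∈ 𝔬` iff `v x ≤ ev 0`, and `x ∈ 𝔬^×` iff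
`v x = ev 0`. -/
def ev (n : ℤ) : Zm0 := ((Multiplicative.ofAdd (-n) : Multiplicative ℤ) : Zm0)

variable {F : Type*} [Field F]

/-- the matrix t(x,y) = [[x, cy],[−ay, x−by]] -/
def tmat (a b c x y : F) : Matrix (Fin 2) (Fin 2) F :=
  !![x, c * y; -(a * y), x - b * y]

/-- the torus T(F) ⊆ GL₂(F), as a set of matrices -/
def TSet (a b c : F) : Set (Matrix (Fin 2) (Fin 2) F) :=
  {m | ∃ x y : F, x ^ 2 - b * x * y + a * c * y ^ 2 ≠ 0 ∧ m = tmat a b c x y}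

def wmat (F : Type*) [Field F] : Matrix (Fin 2) (Fin 2) F := !![0, 1; -1, 0]

/-- GL₂(𝔬) : integral entries and unit determinant -/
def GL2O (v : Valuation F Zm0) : Set (Matrix (Fin 2) (Fin 2) F) :=
  {g | (∀ i j, v (g i j) ≤ ev 0) ∧ v g.det = ev 0}

/-- the Iwahori subgroup I = { g ∈ GL₂(𝔬) : g₂₁ ∈ 𝔭 } -/
def Iwahori (v : Valuation F Zm0) : Set (Matrix (Fin 2) (Fin 2) F) :=
  {g | g ∈ GL2O v ∧ v (g 1 0) ≤ ev 1}

/- ### auxiliary lemmas -/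

lemma ev_zero_eq : ev 0 = 1 := rfl

lemma ev_mul_ev (m n : ℤ) : ev m * ev n = ev (m+n) := by
  simp only [ev, ← WithZero.coe_mul, ← ofAdd_add]; ring_nf

lemma ev_ne_zero (n : ℤ) : ev n ≠ 0 := WithZero.coe_ne_zero

lemma ev_le_ev {m n : ℤ} : ev m ≤ ev n ↔ n ≤ m := by
  rw [ev, ev, WithZero.coe_le_coe, Multiplicative.ofAdd_le]; exact neg_le_neg_iff

lemma ev_one_le_ev_zero : ev 1 ≤ ev 0 := ev_le_ev.mpr (by norm_num)

variable (v : Valuation F Zm0)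

lemma v_pow_pi {ϖ : F} (hϖ : v ϖ = ev 1) (n : ℕ) : v (ϖ ^ n) = ev n := by
  rw [map_pow, hϖ, ev, ev, ← WithZero.coe_pow, WithZero.coe_inj, ← ofAdd_nsmul]
  rw [nsmul_eq_mul]; ring_nf

lemma v_int_mul {x y : F} (hx : v x ≤ ev 0) (hy : v y ≤ ev 0) : v (x*y) ≤ ev 0 := by
  rw [v.map_mul]
  calc v x * v y ≤ ev 0 * ev 0 := mul_le_mul' hx hy
    _ = ev 0 := by rw [ev_mul_ev]; norm_num

lemma v_p_mul_int {x y : F} (hx : v x ≤ ev 1) (hy : v y ≤ ev 0) : v (x*y) ≤ ev 1 := by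
  rw [v.map_mul]
  calc v x * v y ≤ ev 1 * ev 0 := mul_le_mul' hx hy
    _ = ev 1 := by rw [ev_mul_ev]; norm_num

lemma v_add_int {x y : F} (hx : v x ≤ ev 0) (hy : v y ≤ ev 0) : v (x+y) ≤ ev 0 :=
  le_trans (v.map_add x y) (max_le hx hy)

lemma v_add_p {x y : F} (hx : v x ≤ ev 1) (hy : v y ≤ ev 1) : v (x+y) ≤ ev 1 :=
  le_trans (v.map_add x y) (max_le hx hy)

lemma v_two_le : v 2 ≤ ev 0 := by
  have : (2:F) = 1 + 1 := by norm_num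
  rw [this]
  exact v_add_int v (le_of_eq v.map_one) (le_of_eq v.map_one)

lemma v_nonunit {x : F} (h1 : v x ≤ ev 0) (h2 : v x ≠ ev 0) : v x ≤ ev 1 := by
  rcases eq_or_ne (v x) 0 with h | hx
  · rw [h]; exact zero_le'
  · obtain ⟨m, hm⟩ := WithZero.ne_zero_iff_exists.mp hx
    rw [← hm] at h1 h2 ⊢
    rw [ev, WithZero.coe_le_coe] at h1 ⊢
    rw [ev, Ne, WithZero.coe_inj] at h2
    rw [← Multiplicative.toAdd_le] at h1 ⊢
    have h2' : Multiplicative.toAdd m ≠ 0 := by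
      intro h; apply h2; rw [← ofAdd_toAdd m, h]; rfl
    simp only [toAdd_ofAdd] at h1 ⊢
    omega

lemma one_mem_TSet {a b c : F} : (1 : Matrix (Fin 2) (Fin 2) F) ∈ TSet a b c := by
  refine ⟨1, 0, by norm_num, ?_⟩
  rw [tmat, Matrix.one_fin_two]
  norm_num

lemma mul_mem_TSet {a b c : F} {m m' : Matrix (Fin 2) (Fin 2) F}
    (h : m ∈ TSet a b c) (h' : m' ∈ TSet a b c) : m * m' ∈ TSet a b c := by
  obtain ⟨x, y, hN, rfl⟩ := h
  obtain ⟨x', y', hN', rfl⟩ := h'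
  refine ⟨x*x' - a*c*(y*y'), x*y' + x'*y - b*(y*y'), ?_, ?_⟩
  · intro h
    apply hN
    have key : (x*x' - a*c*(y*y'))^2 - b*(x*x' - a*c*(y*y'))*(x*y' + x'*y - b*(y*y'))
        + a*c*(x*y' + x'*y - b*(y*y'))^2
        = (x^2 - b*x*y + a*c*y^2) * (x'^2 - b*x'*y' + a*c*y'^2) := by ring
    rcases mul_eq_zero.mp (key ▸ h) with h | h
    · exact h
    · exact absurd h hN'
  · rw [tmat, tmat, tmat]
    ext i j
    fin_cases i <;> fin_cases j <;>
      simp [Matrix.mul_apply, Fin.sum_univ_two] <;> ring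

lemma one_mem_Iwahori : (1 : Matrix (Fin 2) (Fin 2) F) ∈ Iwahori v := by
  refine ⟨⟨fun i j => ?_, by simp [ev_zero_eq]⟩, ?_⟩
  · fin_cases i <;> fin_cases j <;>
      simp [Matrix.one_fin_two, ev_zero_eq, v.map_one, v.map_zero]
  · simp [Matrix.one_fin_two, v.map_zero]

lemma mul_mem_Iwahori {g h : Matrix (Fin 2) (Fin 2) F}
    (hg : g ∈ Iwahori v) (hh : h ∈ Iwahori v) : g * h ∈ Iwahori v := by
  obtain ⟨⟨hg1, hg2⟩, hg3⟩ := hg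
  obtain ⟨⟨hh1, hh2⟩, hh3⟩ := hh
  refine ⟨⟨fun i j => ?_, ?_⟩, ?_⟩
  · rw [Matrix.mul_apply, Fin.sum_univ_two]
    exact v_add_int v (v_int_mul v (hg1 i 0) (hh1 0 j)) (v_int_mul v (hg1 i 1) (hh1 1 j))
  · rw [Matrix.det_mul, v.map_mul, hg2, hh2, ev_mul_ev]; norm_num
  · rw [Matrix.mul_apply, Fin.sum_univ_two]
    refine v_add_p v (v_p_mul_int v hg3 (hh1 0 0)) ?_
    rw [mul_comm]
    exact v_p_mul_int v hh3 (hg1 1 1)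

lemma doubleCoset_eq {M : Type*} [Monoid M] {T I : Set M}
    (hT : ∀ x ∈ T, ∀ y ∈ T, x * y ∈ T) (hI : ∀ x ∈ I, ∀ y ∈ I, x * y ∈ I)
    {g g' t k t' k' : M} (ht : t ∈ T) (hk : k ∈ I) (ht' : t' ∈ T) (hk' : k' ∈ I)
    (h1 : g' = t * g * k) (h2 : g = t' * g' * k') :
    T * {g} * I = T * {g'} * I := by
  ext z
  constructor
  · rintro ⟨m, ⟨t₁, ht₁, g₁, hg₁, rfl⟩, k₁, hk₁, rfl⟩
    rw [Set.mem_singleton_iff] at hg₁; subst hg₁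
    refine ⟨(t₁ * t') * g', ⟨t₁ * t', hT _ ht₁ _ ht', g', rfl, rfl⟩, k' * k₁, hI _ hk' _ hk₁, ?_⟩
    rw [h2]; group
  · rintro ⟨m, ⟨t₁, ht₁, g₁, hg₁, rfl⟩, k₁, hk₁, rfl⟩
    rw [Set.mem_singleton_iff] at hg₁; subst hg₁
    refine ⟨(t₁ * t) * g, ⟨t₁ * t, hT _ ht₁ _ ht, g, rfl, rfl⟩, k * k₁, hI _ hk _ hk₁, ?_⟩
    rw [h1]; group

set_option maxHeartbeats 1000000 in
/-- Assume d = b² − 4ac is not a square in F.  For every r ≥ 0 and u ∈ 𝔬, the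
double cosets T(F)·diag(ϖ^r,1)·w·I and T(F)·diag(ϖ^r,1)·[[1,0],[u,1]]·I are equal iff
a·ϖ^{2r} + b·ϖ^r·u + c·u² ∈ 𝔬^×. -/
theorem stmt7
    (v : Valuation F Zm0) (ϖ : F) (hϖ : v ϖ = ev 1)
    (a b c : F)
    (hao : v a ≤ ev 0) (hbo : v b ≤ ev 0) (hc : v c = ev 0)
    (hd0 : b ^ 2 - 4 * (a * c) ≠ 0)
    (hnonsq : ∀ s : F, s ^ 2 ≠ b ^ 2 - 4 * (a * c))
    (r : ℕ) (u : F) (hu : v u ≤ ev 0) :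
    TSet a b c * ({!![ϖ ^ r, 0; 0, 1] * wmat F} : Set (Matrix (Fin 2) (Fin 2) F)) * Iwahori v
      = TSet a b c * ({!![ϖ ^ r, 0; 0, 1] * !![1, 0; u, 1]} : Set (Matrix (Fin 2) (Fin 2) F))
          * Iwahori v
    ↔ v (a * ϖ ^ (2 * r) + b * ϖ ^ r * u + c * u ^ 2) = ev 0 := by
  set P : F := ϖ ^ r with hP
  have hπ0 : ϖ ≠ 0 := by
    intro h; rw [h, v.map_zero] at hϖ; exact ev_ne_zero 1 hϖ.symm
  have hP0 : P ≠ 0 := pow_ne_zero r hπ0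
  have hvP : v P = ev r := v_pow_pi v hϖ r
  have hvPle : v P ≤ ev 0 := hvP ▸ ev_le_ev.mpr (by positivity)
  have hc0 : c ≠ 0 := by
    intro h; rw [h, v.map_zero] at hc; exact ev_ne_zero 0 hc.symm
  have hQeq : a * ϖ ^ (2 * r) + b * ϖ ^ r * u + c * u ^ 2
      = a * (P*P) + b * P * u + c * (u*u) := by
    rw [hP, two_mul, pow_add]; ring
  set Q : F := a * (P*P) + b * P * u + c * (u*u) with hQdef
  have hvQle : v Q ≤ ev 0 := by
    refine v_add_int v (v_add_int v ?_ ?_) ?_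
    · exact v_int_mul v hao (v_int_mul v hvPle hvPle)
    · exact v_int_mul v (v_int_mul v hbo hvPle) hu
    · exact v_int_mul v (le_of_eq hc) (v_int_mul v hu hu)
  have hDw : !![P, 0; 0, 1] * wmat F = !![0, P; -1, 0] := by
    rw [wmat]
    ext i j
    fin_cases i <;> fin_cases j <;> simp [Matrix.mul_apply, Fin.sum_univ_two]
  have hDn : !![P, 0; 0, 1] * !![1, 0; u, 1] = !![P, 0; u, 1] := by
    ext i j
    fin_cases i <;> fin_cases j <;> simp [Matrix.mul_apply, Fin.sum_univ_two]
  rw [hQeq, hDw, hDn]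
  constructor
  · -- forward direction
    intro hset
    have hmem : !![P, 0; u, 1] ∈
        TSet a b c * ({!![(0:F), P; -1, 0]} : Set (Matrix (Fin 2) (Fin 2) F)) * Iwahori v := by
      rw [hset]
      exact ⟨1 * !![P, 0; u, 1], ⟨1, one_mem_TSet, !![P, 0; u, 1], rfl, rfl⟩,
        1, one_mem_Iwahori v, by simp⟩
    obtain ⟨m, ⟨t₁, ⟨x, y, hN, rfl⟩, g₁, hg₁, rfl⟩, k, ⟨⟨hk1, hk2⟩, hk3⟩, hmk⟩ := hmem
    rw [Set.mem_singleton_iff] at hg₁; subst hg₁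
    rw [tmat] at hmk
    set N : F := x ^ 2 - b * x * y + a * c * y ^ 2 with hNdef
    -- entry equations
    have E1 := congrFun (congrFun hmk 0) 0
    have E2 := congrFun (congrFun hmk 0) 1
    have E3 := congrFun (congrFun hmk 1) 0
    have E4 := congrFun (congrFun hmk 1) 1
    simp only [Matrix.mul_apply, Fin.sum_univ_two, Matrix.cons_val', Matrix.cons_val_zero,
      Matrix.cons_val_one, Matrix.head_cons, Matrix.head_fin_const, Matrix.empty_val',
      Matrix.cons_val_fin_one, Matrix.of_apply] at E1 E2 E3 E4
    set k00 := k 0 0; set k01 := k 0 1; set k10 := k 1 0; set k11 := k 1 1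
    -- solved forms
    have A2 : N * k01 = -x := by linear_combination (-(a*y))*E2 - x*E4
    have B1 : P * (N * k10) = (x - b*y)*P - c*y*u := by
      linear_combination (x - b*y)*E1 - c*y*E3
    have B2 : P * (N * k11) = -(c*y) := by linear_combination (x - b*y)*E2 - c*y*E4
    -- determinant
    have hdet0 := congrArg Matrix.det hmk
    rw [Matrix.det_mul, Matrix.det_mul, Matrix.det_fin_two_of, Matrix.det_fin_two_of,
      Matrix.det_fin_two_of] at hdet0
    have hNdetk : N * k.det = 1 := by
      apply mul_left_cancel₀ hP0
      linear_combination hdet0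
    have hvN : v N = ev 0 := by
      have h := congrArg v hNdetk
      rw [v.map_mul, hk2, v.map_one, ev_zero_eq, mul_one] at h
      rw [h]; rfl
    have hvx : v x ≤ ev 0 := by
      rw [show x = -(N*k01) by linear_combination A2, v.map_neg]
      exact v_int_mul v (le_of_eq hvN) (hk1 0 1)
    set y₀ : F := -(N*k11) / c with hy₀def
    have hy : y = P * y₀ := by
      rw [hy₀def]
      field_simp
      linear_combination B2
    have hvy₀ : v y₀ ≤ ev 0 := by
      rw [hy₀def, div_eq_mul_inv, v.map_mul, map_inv₀, hc, ev_zero_eq, inv_one, mul_one,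
        v.map_neg]
      exact v_int_mul v (le_of_eq hvN) (hk1 1 1)
    set s : F := N * k10 with hsdef
    have hvs : v s ≤ ev 1 := by
      rw [hsdef, v.map_mul, hvN, ev_zero_eq, one_mul]
      exact hk3
    have hs_eq : s = x - b*P*y₀ - c*(y₀*u) := by
      apply mul_left_cancel₀ hP0
      linear_combination B1 - (b*P + c*u)*hy
    have key : N = s*s + s*(y₀*(b*P + 2*(c*u))) + Q*(y₀*(y₀*c)) := by
      rw [hNdef, hQdef, hs_eq, hy]; ring
    by_contra hne
    have hvQ1 : v Q ≤ ev 1 := v_nonunit v hvQle hne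
    have hfin : v N ≤ ev 1 := by
      rw [key]
      refine v_add_p v (v_add_p v ?_ ?_) ?_
      · exact v_p_mul_int v hvs (le_trans hvs ev_one_le_ev_zero)
      · refine v_p_mul_int v hvs (v_int_mul v hvy₀ ?_)
        refine v_add_int v (v_int_mul v hbo hvPle) (v_int_mul v (v_two_le v)
          (v_int_mul v (le_of_eq hc) hu))
      · exact v_p_mul_int v hvQ1 (v_int_mul v hvy₀ (v_int_mul v hvy₀ (le_of_eq hc)))
    rw [hvN] at hfin
    have := ev_le_ev.mp hfin
    omega
  · -- backward direction
    intro hvQ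
    have hQ0 : Q ≠ 0 := by
      intro h; rw [h, v.map_zero] at hvQ; exact ev_ne_zero 0 hvQ.symm
    have hcQ0 : c * Q ≠ 0 := mul_ne_zero hc0 hQ0
    set X : F := c*u + b*P with hXdef
    have hvX : v X ≤ ev 0 :=
      v_add_int v (v_int_mul v (le_of_eq hc) hu) (v_int_mul v hbo hvPle)
    have hvcQ : v (c*Q) = ev 0 := by
      rw [v.map_mul, hc, hvQ, ev_mul_ev]; norm_num
    -- the explicit elements
    have ht : tmat a b c X P ∈ TSet a b c := by
      refine ⟨X, P, ?_, rfl⟩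
      rw [show X^2 - b*X*P + a*c*P^2 = c*Q by rw [hXdef, hQdef]; ring]
      exact hcQ0
    have ht' : tmat a b c (c*u/(c*Q)) (-P/(c*Q)) ∈ TSet a b c := by
      refine ⟨c*u/(c*Q), -P/(c*Q), ?_, rfl⟩
      rw [show (c*u/(c*Q))^2 - b*(c*u/(c*Q))*(-P/(c*Q)) + a*c*(-P/(c*Q))^2 = (c*Q)⁻¹ by
        field_simp; rw [hQdef]; ring]
      exact inv_ne_zero hcQ0
    have hk : !![-(1/c), -(X/(c*Q)); 0, -(1/Q)] ∈ Iwahori v := by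
      refine ⟨⟨fun i j => ?_, ?_⟩, ?_⟩
      · fin_cases i <;> fin_cases j <;>
          simp only [Matrix.cons_val', Matrix.cons_val_zero, Matrix.cons_val_one,
            Matrix.head_cons, Matrix.empty_val', Matrix.cons_val_fin_one, Matrix.head_fin_const,
            v.map_neg, Fin.isValue, Fin.mk_zero, Fin.mk_one, Matrix.of_apply]
        · rw [one_div, map_inv₀, hc, ev_zero_eq, inv_one]
        · rw [div_eq_mul_inv, v.map_mul, map_inv₀, hvcQ, ev_zero_eq, inv_one, mul_one]
          exact hvX
        · rw [v.map_zero]; exact zero_le'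
        · rw [one_div, map_inv₀, hvQ, ev_zero_eq, inv_one]
      · rw [Matrix.det_fin_two_of,
          show -(1/c) * -(1/Q) - -(X/(c*Q)) * 0 = (c*Q)⁻¹ by field_simp; ring,
          map_inv₀, hvcQ, ev_zero_eq, inv_one]
      · show v (!![-(1/c), -(X/(c*Q)); 0, -(1/Q)] 1 0) ≤ ev 1
        simp only [Matrix.cons_val', Matrix.cons_val_zero, Matrix.cons_val_one,
          Matrix.head_cons, Matrix.empty_val', Matrix.cons_val_fin_one, Matrix.head_fin_const,
          Matrix.of_apply]
        rw [v.map_zero]; exact zero_le'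
    have hk' : !![-c, X; 0, -Q] ∈ Iwahori v := by
      refine ⟨⟨fun i j => ?_, ?_⟩, ?_⟩
      · fin_cases i <;> fin_cases j <;>
          simp only [Matrix.cons_val', Matrix.cons_val_zero, Matrix.cons_val_one,
            Matrix.head_cons, Matrix.empty_val', Matrix.cons_val_fin_one, Matrix.head_fin_const,
            v.map_neg, Fin.isValue, Fin.mk_zero, Fin.mk_one, Matrix.of_apply]
        · exact le_of_eq hc
        · exact hvX
        · rw [v.map_zero]; exact zero_le'
        · exact le_of_eq hvQ
      · rw [Matrix.det_fin_two_of, show -c * -Q - X * 0 = c*Q by ring]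
        exact hvcQ
      · show v (!![-c, X; 0, -Q] 1 0) ≤ ev 1
        simp only [Matrix.cons_val', Matrix.cons_val_zero, Matrix.cons_val_one,
          Matrix.head_cons, Matrix.empty_val', Matrix.cons_val_fin_one, Matrix.head_fin_const,
          Matrix.of_apply]
        rw [v.map_zero]; exact zero_le'
    have h1 : !![P, 0; u, 1] =
        tmat a b c X P * !![(0:F), P; -1, 0] * !![-(1/c), -(X/(c*Q)); 0, -(1/Q)] := by
      rw [tmat, hXdef]
      ext i j
      fin_cases i <;> fin_cases j <;>
        simp only [Matrix.mul_apply, Fin.sum_univ_two, Matrix.cons_val', Matrix.cons_val_zero,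
          Matrix.cons_val_one, Matrix.head_cons, Matrix.head_fin_const, Matrix.empty_val',
          Matrix.cons_val_fin_one, Matrix.of_apply, Fin.isValue, Fin.mk_zero, Fin.mk_one] <;>
          field_simp <;> ring_nf <;> rw [hQdef] <;> ring
    have h2 : !![(0:F), P; -1, 0] =
        tmat a b c (c*u/(c*Q)) (-P/(c*Q)) * !![P, 0; u, 1] * !![-c, X; 0, -Q] := by
      rw [tmat, hXdef]
      ext i j
      fin_cases i <;> fin_cases j <;>
        simp only [Matrix.mul_apply, Fin.sum_univ_two, Matrix.cons_val', Matrix.cons_val_zero,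
          Matrix.cons_val_one, Matrix.head_cons, Matrix.head_fin_const, Matrix.empty_val',
          Matrix.cons_val_fin_one, Matrix.of_apply, Fin.isValue, Fin.mk_zero, Fin.mk_one] <;>
          field_simp <;> ring_nf <;> rw [hQdef] <;> ring
    exact doubleCoset_eq (fun x hx y hy => mul_mem_TSet hx hy)
      (fun x hx y hy => mul_mem_Iwahori v hx hy) ht hk ht' hk' h1 h2
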